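/- Let n ≥ 1 and let t = (t_{i,j,k})_{1 ≤ i < j < k ≤ n} be a family of integers such that the normal form map N_t : ℤ^n → G(t) is bijective. Let t_w = (t_{i,j,k})_{1 ≤ i < j < k ≤ n−1} be the subfamily of entries with all indices different from n. Then the normal form map N_{t_w} : ℤ^{n−1} → G(t_w) is also bijective; i.e., if t is consistent then t_w is consistent. -/

import Mathlib

namespace HallPoly

/-- The ordered product `g_1^{e_1} ⋯ g_n^{e_n}` taken in increasing order of indices. -/
def prodPow {Γ : Type*} [Group Γ] (n : ℕ) (g : Fin n → Γ) (e : Fin n → ℤ) : Γ :=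
  ((List.finRange n).map fun k => g k ^ e k).prod

/-- The relators of the presented group `G(t)`:
`(a_i · a_j · a_{j+1}^{t_{i,j,j+1}} ⋯ a_n^{t_{i,j,n}})⁻¹ · (a_j · a_i)` for `1 ≤ i < j ≤ n`. -/
def rels (n : ℕ) (t : Fin n → Fin n → Fin n → ℤ) : Set (FreeGroup (Fin n)) :=
  { r | ∃ i j : Fin n, i < j ∧
      r = (FreeGroup.of i * FreeGroup.of j *
            prodPow n FreeGroup.of (fun k => if j < k then t i j k else 0))⁻¹ *
          (FreeGroup.of j * FreeGroup.of i) }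

/-- The presented group `G(t)` with generators `a_1, …, a_n` and relations
`a_j·a_i = a_i·a_j·a_{j+1}^{t_{i,j,j+1}} ⋯ a_n^{t_{i,j,n}}` for `1 ≤ i < j ≤ n`. -/
abbrev G (n : ℕ) (t : Fin n → Fin n → Fin n → ℤ) : Type := PresentedGroup (rels n t)

/-- The generators `a_1, …, a_n` of `G(t)`. -/
def a (n : ℕ) (t : Fin n → Fin n → Fin n → ℤ) (i : Fin n) : G n t :=
  PresentedGroup.of i

/-- The normal form map `N_t : ℤⁿ → G(t)`, `x ↦ a_1^{x_1} ⋯ a_n^{x_n}`. -/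
def N (n : ℕ) (t : Fin n → Fin n → Fin n → ℤ) (x : Fin n → ℤ) : G n t :=
  prodPow n (a n t) x

lemma finRange_succ_snoc (n : ℕ) :
    List.finRange (n + 1) = ((List.finRange n).map Fin.castSucc) ++ [Fin.last n] := by
  induction n with
  | zero => rfl
  | succ n ih =>
    conv_rhs => rw [List.finRange_succ]
    rw [List.finRange_succ, ih, List.map_append]
    simp only [List.map_cons, List.map_map, List.map_nil, Fin.succ_last, List.cons_append,
      List.nil_append]
    simp [Function.comp_def]

lemma prodPow_succ {Γ : Type*} [Group Γ] (n : ℕ) (g : Fin (n + 1) → Γ) (e : Fin (n + 1) → ℤ) :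
    prodPow (n + 1) g e =
      prodPow n (fun i => g i.castSucc) (fun i => e i.castSucc) *
        g (Fin.last n) ^ e (Fin.last n) := by
  unfold prodPow
  rw [finRange_succ_snoc, List.map_append, List.prod_append, List.map_map]
  simp [Function.comp_def]

lemma map_prodPow {Γ H : Type*} [Group Γ] [Group H] (φ : Γ →* H) (n : ℕ)
    (g : Fin n → Γ) (e : Fin n → ℤ) :
    φ (prodPow n g e) = prodPow n (fun k => φ (g k)) e := by
  unfold prodPow
  rw [map_list_prod, List.map_map]
  congr 1
  simp [Function.comp_def]

lemma prodPow_eq_one {Γ : Type*} [Group Γ] (n : ℕ) (g : Fin n → Γ) (e : Fin n → ℤ)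
    (h : ∀ k, e k = 0) : prodPow n g e = 1 := by
  unfold prodPow
  apply List.prod_eq_one
  intro x hx
  obtain ⟨k, -, rfl⟩ := List.mem_map.1 hx
  rw [h k, zpow_zero]

lemma rel_eq (n : ℕ) (t : Fin n → Fin n → Fin n → ℤ) {i j : Fin n} (h : i < j) :
    a n t j * a n t i =
      a n t i * a n t j * prodPow n (a n t) (fun k => if j < k then t i j k else 0) := by
  have hr : ((FreeGroup.of i * FreeGroup.of j *
        prodPow n FreeGroup.of (fun k => if j < k then t i j k else 0))⁻¹ *
      (FreeGroup.of j * FreeGroup.of i)) ∈ rels n t := ⟨i, j, h, rfl⟩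
  have h1 : PresentedGroup.mk (rels n t) ((FreeGroup.of i * FreeGroup.of j *
        prodPow n FreeGroup.of (fun k => if j < k then t i j k else 0))⁻¹ *
      (FreeGroup.of j * FreeGroup.of i)) = 1 :=
    (QuotientGroup.eq_one_iff _).mpr (Subgroup.subset_normalClosure hr)
  rw [map_mul, map_inv, map_mul, map_mul, map_prodPow, map_mul] at h1
  have h2 := congrArg (fun z => (PresentedGroup.mk (rels n t) (FreeGroup.of i) *
      PresentedGroup.mk (rels n t) (FreeGroup.of j) *
      prodPow n (fun k => PresentedGroup.mk (rels n t) (FreeGroup.of k))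
        (fun k => if j < k then t i j k else 0)) * z) h1
  simp only [mul_inv_cancel_left, mul_one] at h2
  exact h2.symm ▸ rfl

/-- If `G(t)` is consistent, then so is `G(t_w)`, where `t_w` is the subfamily of `t` of
entries with all indices different from `n`: the normal form map `N_{t_w} : ℤ^{n-1} → G(t_w)`
is also bijective. -/
theorem consistent_tw (m : ℕ) (t : Fin (m + 1) → Fin (m + 1) → Fin (m + 1) → ℤ)
    (hN : Function.Bijective (N (m + 1) t))
    (tw : Fin m → Fin m → Fin m → ℤ)
    (htw : ∀ i j k : Fin m, tw i j k = t i.castSucc j.castSucc k.castSucc) :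
    Function.Bijective (N m tw) := by
  classical
  set aL : G (m + 1) t := a (m + 1) t (Fin.last m) with haL
  -- the quotient hom ψ : G(t) →* G(tw), killing the last generator
  set f1 : Fin (m + 1) → G m tw := fun i => Fin.lastCases 1 (a m tw) i with hf1
  have hf1c : ∀ i : Fin m, f1 i.castSucc = a m tw i := fun i => by
    simp [hf1]
  have hf1l : f1 (Fin.last m) = 1 := by simp [hf1]
  have hψrels : ∀ r ∈ rels (m + 1) t, FreeGroup.lift f1 r = 1 := by
    rintro r ⟨i, j, hij, rfl⟩
    rw [map_mul, map_inv, map_mul, map_mul, map_prodPow, map_mul]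
    simp only [FreeGroup.lift_apply_of]
    rcases Fin.eq_castSucc_or_eq_last j with ⟨j0, rfl⟩ | rfl
    · obtain ⟨i0, rfl⟩ : ∃ i0 : Fin m, i = i0.castSucc :=
        ⟨i.castPred (Fin.ne_last_of_lt hij), (Fin.castSucc_castPred _ _).symm⟩
      have hij0 : i0 < j0 := by rwa [Fin.castSucc_lt_castSucc_iff] at hij
      rw [prodPow_succ]
      simp only [hf1c, hf1l, one_zpow, mul_one]
      have hexp : (fun k : Fin m =>
          if j0.castSucc < k.castSucc then t i0.castSucc j0.castSucc k.castSucc else 0) =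
          fun k : Fin m => if j0 < k then tw i0 j0 k else 0 := by
        funext k
        simp only [Fin.castSucc_lt_castSucc_iff, htw]
      rw [hexp, rel_eq m tw hij0]
      group
    · have hz : ∀ k : Fin (m + 1),
          (if Fin.last m < k then t i (Fin.last m) k else 0) = 0 := by
        intro k
        rw [if_neg (not_lt.mpr (Fin.le_last k))]
      rw [prodPow_eq_one _ _ _ hz, hf1l]
      group
  set ψ : G (m + 1) t →* G m tw := PresentedGroup.toGroup hψrels with hψ
  have hψa : ∀ i : Fin (m + 1), ψ (a (m + 1) t i) = f1 i := fun i =>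
    PresentedGroup.toGroup.of hψrels
  have hψN : ∀ x : Fin (m + 1) → ℤ, ψ (N (m + 1) t x) = N m tw (x ∘ Fin.castSucc) := by
    intro x
    unfold N
    rw [map_prodPow, prodPow_succ]
    simp only [hψa, hf1c, hf1l, one_zpow, mul_one]
    rfl
  -- centrality of the last generator
  have hcomm_gen : ∀ i : Fin (m + 1), Commute aL (a (m + 1) t i) := by
    intro i
    rcases Fin.eq_castSucc_or_eq_last i with ⟨i0, rfl⟩ | rfl
    · have hlt : i0.castSucc < Fin.last m := Fin.castSucc_lt_last i0
      have := rel_eq (m + 1) t hlt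
      rw [prodPow_eq_one _ _ _ (fun k => if_neg (not_lt.mpr (Fin.le_last k))), mul_one] at this
      exact this
    · exact Commute.refl _
  have hcentral : ∀ g : G (m + 1) t, Commute aL g := by
    intro g
    obtain ⟨x, rfl⟩ := hN.2 g
    unfold N prodPow
    refine Commute.list_prod_right _ _ ?_
    intro y hy
    obtain ⟨k, -, rfl⟩ := List.mem_map.1 hy
    exact (hcomm_gen k).zpow_right _
  set Z : Subgroup (G (m + 1) t) := Subgroup.zpowers aL with hZ
  haveI hZnormal : Z.Normal := by
    constructor
    intro z hz g
    obtain ⟨c, rfl⟩ := hz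
    have : Commute (aL ^ c) g := (hcentral g).zpow_left c
    rw [← this.eq, mul_inv_cancel_right]
    exact ⟨c, rfl⟩
  -- the hom θ : G(tw) →* G(t)/Z
  set π : G (m + 1) t →* G (m + 1) t ⧸ Z := QuotientGroup.mk' Z with hπ
  set f2 : Fin m → G (m + 1) t ⧸ Z := fun i => π (a (m + 1) t i.castSucc) with hf2
  have hθrels : ∀ r ∈ rels m tw, FreeGroup.lift f2 r = 1 := by
    rintro r ⟨i, j, hij, rfl⟩
    rw [map_mul, map_inv, map_mul, map_mul, map_prodPow, map_mul]
    simp only [FreeGroup.lift_apply_of, hf2]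
    have hmap : prodPow m (fun k => π (a (m + 1) t k.castSucc))
          (fun k => if j < k then tw i j k else 0) =
        π (prodPow m (fun k => a (m + 1) t k.castSucc)
          (fun k => if j < k then tw i j k else 0)) := (map_prodPow π m _ _).symm
    rw [hmap, ← map_mul, ← map_mul, ← map_inv, ← map_mul, ← map_mul]
    refine (QuotientGroup.eq_one_iff _).mpr ?_
    have hij' : i.castSucc < j.castSucc := Fin.castSucc_lt_castSucc_iff.mpr hij
    have hrel := rel_eq (m + 1) t hij'
    rw [prodPow_succ] at hrel
    have hexp : (fun k : Fin m =>
        if j.castSucc < k.castSucc then t i.castSucc j.castSucc k.castSucc else 0) =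
        fun k : Fin m => if j < k then tw i j k else 0 := by
      funext k
      simp only [Fin.castSucc_lt_castSucc_iff, htw]
    rw [hexp, if_pos (Fin.castSucc_lt_last j)] at hrel
    rw [hrel]
    have heq : ((a (m + 1) t i.castSucc * a (m + 1) t j.castSucc *
          prodPow m (fun k => a (m + 1) t k.castSucc)
            (fun k => if j < k then tw i j k else 0))⁻¹ *
        (a (m + 1) t i.castSucc * a (m + 1) t j.castSucc *
          (prodPow m (fun k => a (m + 1) t k.castSucc)
            (fun k => if j < k then tw i j k else 0) *
          aL ^ t i.castSucc j.castSucc (Fin.last m)))) =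
        aL ^ t i.castSucc j.castSucc (Fin.last m) := by
      group
    rw [heq]
    exact ⟨_, rfl⟩
  set θ : G m tw →* G (m + 1) t ⧸ Z := PresentedGroup.toGroup hθrels with hθ
  have hθa : ∀ i : Fin m, θ (a m tw i) = f2 i := fun i =>
    PresentedGroup.toGroup.of hθrels
  have hθN : ∀ x : Fin m → ℤ, θ (N m tw x) = π (N (m + 1) t (Fin.snoc x 0)) := by
    intro x
    unfold N
    rw [map_prodPow]
    simp only [hθa, hf2]
    rw [← map_prodPow π m (fun k => a (m + 1) t k.castSucc) x]
    congr 1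
    rw [prodPow_succ]
    simp [Fin.snoc_castSucc, Fin.snoc_last]
  constructor
  · -- injectivity
    intro x y hxy
    have h1 := congrArg θ hxy
    rw [hθN, hθN, hπ] at h1
    rw [QuotientGroup.mk'_eq_mk'] at h1
    obtain ⟨z, ⟨c, rfl⟩, hzc⟩ := h1
    have hx0 : N (m + 1) t (Fin.snoc x 0) * aL ^ c = N (m + 1) t (Fin.snoc x c) := by
      unfold N
      rw [prodPow_succ, prodPow_succ]
      simp [Fin.snoc_castSucc, Fin.snoc_last, haL]
    rw [hx0] at hzc
    have := hN.1 hzc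
    funext k
    have hk := congrFun this k.castSucc
    simpa [Fin.snoc_castSucc] using hk
  · -- surjectivity
    intro g
    obtain ⟨w, rfl⟩ := PresentedGroup.mk_surjective (rels m tw) g
    have hkey : (ψ.comp ((PresentedGroup.mk (rels (m + 1) t)).comp
        (FreeGroup.map Fin.castSucc))) = PresentedGroup.mk (rels m tw) := by
      refine FreeGroup.ext_hom _ _ fun i => ?_
      show ψ (PresentedGroup.mk (rels (m + 1) t) (FreeGroup.map Fin.castSucc (FreeGroup.of i))) =
        PresentedGroup.mk (rels m tw) (FreeGroup.of i)
      rw [FreeGroup.map.of]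
      exact (hψa i.castSucc).trans (hf1c i)
    obtain ⟨x, hx⟩ := hN.2 (PresentedGroup.mk (rels (m + 1) t) (FreeGroup.map Fin.castSucc w))
    refine ⟨x ∘ Fin.castSucc, ?_⟩
    rw [← hψN, hx, ← hkey]
    rfl

end HallPoly
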